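/- Let h : B → B be the solenoid map and Λ = ∩_{k≥0} h^k(B) its maximal attractor. Let S¹ = ℝ/2ℤ, and let 𝒢 : B × S¹ → B × S¹ be a skew product 𝒢(b, x) = (h(b), g_b(x)), where each fiber map g_b is a homeomorphism of S¹, b ↦ g_b is continuous in the C⁰ topology, and there exist a closed arc I ⊂ S¹ and a constant l < 1 such that g_b(I) ⊆ I and the restriction of g_b to I is Lipschitz with constant l for every b ∈ B. Then A* = ∩_{k≥1} 𝒢^k(B × I) is the graph of a continuous function γ : Λ → I; moreover the projection p : A* → Λ, p(b,x) = b, is a homeomorphism satisfying p ∘ 𝒢 = h ∘ p on A*, so the restriction of 𝒢 to A* is topologically conjugate to the restriction of h to Λ. -/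

import Mathlib

open MeasureTheory Set Filter Topology Metric

instance : Fact ((0 : ℝ) < 2) := ⟨by norm_num⟩

/-- The circle `S¹ = ℝ/2ℤ`. -/
abbrev S1 := AddCircle (2 : ℝ)

/-- The base of the solenoid: the ambient space `(ℝ/ℤ) × ℂ`. -/
abbrev Base := AddCircle (1 : ℝ) × ℂ

/-- The solenoid map `h(y,z) = (2y, e^{2πiy} + λz)` (here `AddCircle.toCircle y = e^{2πiy}`). -/
noncomputable def solenoidMap (lam : ℝ) (b : Base) : Base :=
  (b.1 + b.1, (AddCircle.toCircle b.1 : ℂ) + lam * b.2)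

/-- The solid torus `B = (ℝ/ℤ) × D(R)`. -/
def solidTorus (R : ℝ) : Set Base := univ ×ˢ closedBall (0 : ℂ) R

/-- The Smale–Williams solenoid `Λ = ∩_{k≥0} h^k(B)`. -/
noncomputable def solenoidAttractor (lam R : ℝ) : Set Base :=
  ⋂ k : ℕ, (solenoidMap lam)^[k] '' solidTorus R

/-- The skew product `𝒢(b,x) = (h(b), g_b(x))` over the solenoid map. -/
noncomputable def skewSol (lam : ℝ) (g : Base → S1 ≃ₜ S1) (p : Base × S1) : Base × S1 :=
  (solenoidMap lam p.1, g p.1 p.2)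

/-- The maximal attractor `A* = ∩_{k≥1} 𝒢^k(B × I)`. -/
noncomputable def maxAttr (lam R : ℝ) (g : Base → S1 ≃ₜ S1) (I : Set S1) :
    Set (Base × S1) :=
  ⋂ k : ℕ, (skewSol lam g)^[k + 1] '' (solidTorus R ×ˢ I)

/-- `I` is a closed arc of `S¹`, the image of a closed interval of length `< 2`. -/
def IsClosedArc (I : Set S1) : Prop :=
  ∃ a b : ℝ, a ≤ b ∧ b - a < 2 ∧ I = (fun x : ℝ => ((x : ℝ) : S1)) '' Icc a b

section aux

lemma sol_cont (lam : ℝ) : Continuous (solenoidMap lam) := by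
  have h1 : Continuous (fun y : AddCircle (1:ℝ) => (AddCircle.toCircle y : ℂ)) :=
    continuous_induced_dom.comp AddCircle.continuous_toCircle
  unfold solenoidMap
  exact ((continuous_fst.add continuous_fst).prodMk
    ((h1.comp continuous_fst).add (continuous_const.mul continuous_snd)))

lemma torus_compact (R : ℝ) : IsCompact (solidTorus R) :=
  isCompact_univ.prod (isCompact_closedBall _ _)

lemma sol_mapsTo {R lam : ℝ} (hR : 2 ≤ R) (hlam0 : 0 < lam) (hlamR : lam * R < 1) :
    MapsTo (solenoidMap lam) (solidTorus R) (solidTorus R) := by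
  rintro ⟨y, z⟩ hb
  simp only [solidTorus, mem_prod, mem_univ, true_and, mem_closedBall,
    Complex.dist_eq, sub_zero] at hb ⊢
  calc ‖(↑(AddCircle.toCircle y) + ↑lam * z)‖
      ≤ ‖((AddCircle.toCircle y : ℂ))‖ + ‖(↑lam * z)‖ := norm_add_le _ _
    _ = 1 + lam * ‖z‖ := by
        rw [Circle.norm_coe, norm_mul, Complex.norm_real, Real.norm_eq_abs, abs_of_pos hlam0]
    _ ≤ 1 + lam * R := by nlinarith
    _ ≤ R := by nlinarith

lemma sol_injOn {R lam : ℝ} (hlam0 : 0 < lam) (hlamR : lam * R < 1) :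
    InjOn (solenoidMap lam) (solidTorus R) := by
  rintro ⟨y, z⟩ hb ⟨y', z'⟩ hb' heq
  simp only [solidTorus, mem_prod, mem_univ, true_and, mem_closedBall,
    Complex.dist_eq, sub_zero] at hb hb'
  simp only [solenoidMap, Prod.mk.injEq] at heq
  obtain ⟨h1, h2⟩ := heq
  have hy : y = y' := by
    by_contra hne
    have hu : (AddCircle.toCircle y : ℂ) ≠ (AddCircle.toCircle y' : ℂ) := by
      intro hc
      exact hne (AddCircle.injective_toCircle one_ne_zero (Circle.coe_injective hc))
    have hsq : ((AddCircle.toCircle y : ℂ))^2 = ((AddCircle.toCircle y' : ℂ))^2 := by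
      have := congrArg (fun w => ((AddCircle.toCircle w : ℂ))) h1
      simpa [AddCircle.toCircle_add, sq] using this
    have hneg : (AddCircle.toCircle y : ℂ) = -(AddCircle.toCircle y' : ℂ) := by
      rcases sq_eq_sq_iff_eq_or_eq_neg.mp hsq with h | h
      · exact absurd h hu
      · exact h
    have hdiff : (AddCircle.toCircle y : ℂ) - (AddCircle.toCircle y' : ℂ) = ↑lam * (z' - z) := by
      linear_combination h2
    have h2abs : ‖((AddCircle.toCircle y : ℂ) - (AddCircle.toCircle y' : ℂ))‖ = 2 := by
      rw [hneg, ← neg_add', norm_neg, ← two_mul, norm_mul, Circle.norm_coe]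
      simp
    have hlt : ‖(↑lam * (z' - z))‖ < 2 := by
      rw [norm_mul, Complex.norm_real, Real.norm_eq_abs, abs_of_pos hlam0]
      have h3 : ‖(z' - z)‖ ≤ 2 * R := by
        calc ‖(z' - z)‖ ≤ ‖z'‖ + ‖z‖ := by
              simpa using norm_sub_le z' z
          _ ≤ 2 * R := by linarith
      nlinarith
    rw [← hdiff, h2abs] at hlt
    exact lt_irrefl _ hlt
  subst hy
  have hlz : (lam : ℂ) * z = lam * z' := by linear_combination h2
  have hz : z = z' := by
    have hlne : (lam : ℂ) ≠ 0 := by exact_mod_cast hlam0.ne'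
    exact mul_left_cancel₀ hlne hlz
  simp [hz]

variable {R lam : ℝ}

lemma attr_subset : solenoidAttractor lam R ⊆ solidTorus R := by
  have := iInter_subset (fun k => (solenoidMap lam)^[k] '' solidTorus R) 0
  simpa [solenoidAttractor] using this

lemma iter_img_subset (hm : MapsTo (solenoidMap lam) (solidTorus R) (solidTorus R)) (k : ℕ) :
    (solenoidMap lam)^[k] '' solidTorus R ⊆ solidTorus R :=
  (hm.iterate k).image_subset

lemma iter_img_succ (k : ℕ) :
    (solenoidMap lam)^[k+1] '' solidTorus R
      = (solenoidMap lam)^[k] '' (solenoidMap lam '' solidTorus R) := by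
  rw [← image_comp]; rfl

lemma iter_img_anti (hm : MapsTo (solenoidMap lam) (solidTorus R) (solidTorus R)) (k : ℕ) :
    (solenoidMap lam)^[k+1] '' solidTorus R ⊆ (solenoidMap lam)^[k] '' solidTorus R := by
  rw [iter_img_succ]
  exact image_mono hm.image_subset

lemma attr_mapsTo (hm : MapsTo (solenoidMap lam) (solidTorus R) (solidTorus R)) :
    MapsTo (solenoidMap lam) (solenoidAttractor lam R) (solenoidAttractor lam R) := by
  intro b hb
  rw [solenoidAttractor, mem_iInter] at hb ⊢
  intro k
  apply iter_img_anti hm k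
  rw [iter_img_succ]
  obtain ⟨a, ha, rfl⟩ := hb k
  exact ⟨solenoidMap lam a, mem_image_of_mem _ ha, by
    rw [← Function.iterate_succ_apply, Function.iterate_succ_apply']⟩

lemma attr_surjOn (hm : MapsTo (solenoidMap lam) (solidTorus R) (solidTorus R))
    (hinj : InjOn (solenoidMap lam) (solidTorus R)) :
    SurjOn (solenoidMap lam) (solenoidAttractor lam R) (solenoidAttractor lam R) := by
  intro b hb
  rw [solenoidAttractor, mem_iInter] at hb
  have hck : ∀ k, ∃ c ∈ (solenoidMap lam)^[k] '' solidTorus R, solenoidMap lam c = b := by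
    intro k
    have := hb (k + 1)
    rw [Function.iterate_succ', Set.image_comp] at this
    obtain ⟨c, hc, hcb⟩ := this
    exact ⟨c, hc, hcb⟩
  obtain ⟨c0, hc0, hc0b⟩ := hck 0
  refine ⟨c0, ?_, hc0b⟩
  rw [solenoidAttractor, mem_iInter]
  intro k
  obtain ⟨c, hc, hcb⟩ := hck k
  have : c = c0 := hinj (iter_img_subset hm k hc) (iter_img_subset hm 0 hc0) (hcb.trans hc0b.symm)
  exact this ▸ hc

lemma attr_compact : IsCompact (solenoidAttractor lam R) := by
  refine (torus_compact R).of_isClosed_subset ?_ attr_subset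
  exact isClosed_iInter fun k =>
    (((torus_compact R).image ((sol_cont lam).iterate k)).isClosed)

lemma attr_preimage (hm : MapsTo (solenoidMap lam) (solidTorus R) (solidTorus R))
    (hinj : InjOn (solenoidMap lam) (solidTorus R)) :
    ∀ k, ∀ b ∈ solenoidAttractor lam R,
      ∃ c ∈ solenoidAttractor lam R, (solenoidMap lam)^[k] c = b := by
  intro k
  induction k with
  | zero => exact fun b hb => ⟨b, hb, rfl⟩
  | succ k ih =>
    intro b hb
    obtain ⟨c, hc, hcb⟩ := ih b hb
    obtain ⟨c', hc', hc'c⟩ := attr_surjOn hm hinj hc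
    exact ⟨c', hc', by rw [Function.iterate_succ_apply, hc'c, hcb]⟩

lemma skew_fst (lam : ℝ) (g : Base → S1 ≃ₜ S1) :
    ∀ n (p : Base × S1), ((skewSol lam g)^[n] p).1 = (solenoidMap lam)^[n] p.1 := by
  intro n
  induction n with
  | zero => intro p; rfl
  | succ n ih =>
    intro p
    rw [Function.iterate_succ_apply, Function.iterate_succ_apply, ih]
    rfl

end aux

/-- Let `h` be the solenoid map, `Λ` its maximal attractor, and
`𝒢(b,x) = (h(b), g_b(x))` a skew product whose fiber maps `g_b` are homeomorphisms of
`S¹ = ℝ/2ℤ` depending continuously on `b` (C⁰ topology), with a closed arc `I` and a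
constant `l < 1` such that `g_b(I) ⊆ I` and `g_b|I` is `l`-Lipschitz for every `b ∈ B`.
Then `A* = ∩_{k≥1} 𝒢^k(B × I)` is the graph of a continuous function `γ : Λ → I`, the
projection `p(b,x) = b` restricts to a homeomorphism `A* ≃ₜ Λ`, and it conjugates `𝒢|A*`
with `h|Λ` (`γ(h(b)) = g_b(γ(b))` on `Λ`, i.e. `p ∘ 𝒢 = h ∘ p` on `A*`). -/
theorem stmt_14 (R lam : ℝ) (hR : 2 ≤ R) (hlam0 : 0 < lam) (hlam1 : lam < 0.1)
    (hlamR : lam * R < 1)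
    (g : Base → S1 ≃ₜ S1) (I : Set S1) (hI : IsClosedArc I)
    (hcont : ContinuousOn (fun b => ((g b : C(S1, S1)))) (solidTorus R))
    (l : NNReal) (hl : (l : ℝ) < 1)
    (hmaps : ∀ b ∈ solidTorus R, MapsTo (g b) I I)
    (hlip : ∀ b ∈ solidTorus R, LipschitzOnWith l (g b) I) :
    ∃ γ : Base → S1, ContinuousOn γ (solenoidAttractor lam R) ∧
      (∀ b ∈ solenoidAttractor lam R, γ b ∈ I) ∧
      maxAttr lam R g I
        = {p : Base × S1 | p.1 ∈ solenoidAttractor lam R ∧ p.2 = γ p.1} ∧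
      (∃ e : maxAttr lam R g I ≃ₜ solenoidAttractor lam R,
        ∀ p : maxAttr lam R g I, (e p : Base) = (p : Base × S1).1) ∧
      (∀ b ∈ solenoidAttractor lam R, γ (solenoidMap lam b) = g b (γ b)) := by
  classical
  obtain ⟨a0, b0, hab0, _, hIeq⟩ := hI
  have hx0 : ((a0 : ℝ) : S1) ∈ I := hIeq ▸ ⟨a0, ⟨le_refl _, hab0⟩, rfl⟩
  set x0 : S1 := ((a0 : ℝ) : S1) with hx0def
  have hIclosed : IsClosed I := by
    rw [hIeq]
    have hc : Continuous (fun x : ℝ => ((x : ℝ) : S1)) := continuous_quotient_mk'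
    exact (isCompact_Icc.image hc).isClosed
  set K := solenoidAttractor lam R with hKdef
  set h := solenoidMap lam with hhdef
  have hm : MapsTo h (solidTorus R) (solidTorus R) := sol_mapsTo hR hlam0 hlamR
  have hinjB : InjOn h (solidTorus R) := sol_injOn hlam0 hlamR
  have hKB : K ⊆ solidTorus R := attr_subset
  have hKm : MapsTo h K K := attr_mapsTo hm
  haveI : CompactSpace ↥K := isCompact_iff_compactSpace.mp attr_compact
  -- the homeomorphism h : K ≃ₜ K
  have hFbij : Function.Bijective (fun b : ↥K => (⟨h b.1, hKm b.2⟩ : ↥K)) := by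
    constructor
    · intro a b hab
      exact Subtype.ext (hinjB (hKB a.2) (hKB b.2) (congrArg Subtype.val hab))
    · intro b
      obtain ⟨c, hc, hcb⟩ := attr_surjOn hm hinjB b.2
      exact ⟨⟨c, hc⟩, Subtype.ext hcb⟩
  have hFcont : Continuous (fun b : ↥K => (⟨h b.1, hKm b.2⟩ : ↥K)) :=
    (((sol_cont lam).comp continuous_subtype_val).subtype_mk _)
  let H : ↥K ≃ₜ ↥K := Continuous.homeoOfEquivCompactToT2
    (f := Equiv.ofBijective _ hFbij) hFcont
  have hHval : ∀ b : ↥K, (H b : Base) = h b.1 := fun b => rfl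
  -- the space of candidate invariant sections
  let X : Set C(↥K, S1) := {γ | ∀ b, γ b ∈ I}
  have hXclosed : IsClosed X := by
    have hXeq : X = ⋂ b, (fun γ : C(↥K, S1) => γ b) ⁻¹' I := by
      ext γ; simp [X, mem_iInter, mem_preimage]
    rw [hXeq]
    exact isClosed_iInter fun b => hIclosed.preimage (continuous_eval_const b)
  haveI : CompleteSpace ↥X := hXclosed.completeSpace_coe
  haveI : Nonempty ↥X := ⟨⟨ContinuousMap.const _ x0, fun _ => hx0⟩⟩
  -- the graph transform operator
  have hTcont : ∀ γ : ↥X, Continuous (fun b : ↥K => g ((H.symm b : ↥K) : Base) (γ.1 (H.symm b))) := by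
    intro γ
    have h1 : Continuous (fun b : ↥K => ((g ((H.symm b : ↥K) : Base) : C(S1, S1)))) := by
      refine hcont.comp_continuous (continuous_subtype_val.comp H.symm.continuous) ?_
      exact fun b => hKB (H.symm b).2
    have h2 : Continuous (fun b : ↥K => γ.1 (H.symm b)) :=
      γ.1.continuous.comp H.symm.continuous
    exact continuous_eval.comp (h1.prodMk h2)
  let T : ↥X → ↥X := fun γ =>
    ⟨⟨fun b => g ((H.symm b : ↥K) : Base) (γ.1 (H.symm b)), hTcont γ⟩,
      fun b => hmaps _ (hKB (H.symm b).2) (γ.2 _)⟩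
  have hTlip : LipschitzWith l T := by
    apply LipschitzWith.of_dist_le_mul
    intro γ1 γ2
    rw [Subtype.dist_eq, ContinuousMap.dist_le (by positivity)]
    intro b
    calc dist (g ((H.symm b : ↥K) : Base) (γ1.1 (H.symm b)))
          (g ((H.symm b : ↥K) : Base) (γ2.1 (H.symm b)))
        ≤ l * dist (γ1.1 (H.symm b)) (γ2.1 (H.symm b)) := by
          have := lipschitzOnWith_iff_dist_le_mul.mp (hlip _ (hKB (H.symm b).2))
          exact this _ (γ1.2 _) _ (γ2.2 _)
      _ ≤ l * dist γ1 γ2 := by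
          have h1 : dist (γ1.1 (H.symm b)) (γ2.1 (H.symm b)) ≤ dist γ1.1 γ2.1 :=
            ContinuousMap.dist_apply_le_dist _
          have h2 : dist (γ1.1 : C(↥K, S1)) γ2.1 = dist γ1 γ2 := (Subtype.dist_eq γ1 γ2).symm
          nlinarith [dist_nonneg (x := γ1) (y := γ2), l.coe_nonneg]
  have hl' : l < 1 := by exact_mod_cast hl
  have hT : ContractingWith l T := ⟨hl', hTlip⟩
  let γ0 : ↥X := hT.fixedPoint T
  have hγ0fix : T γ0 = γ0 := hT.fixedPoint_isFixedPt
  -- the invariant section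
  let γatt : Base → S1 := fun b => if hb : b ∈ K then γ0.1 ⟨b, hb⟩ else x0
  have hγattK : ∀ (b : Base) (hb : b ∈ K), γatt b = γ0.1 ⟨b, hb⟩ := fun b hb => dif_pos hb
  have hconj : ∀ b ∈ K, γatt (h b) = g b (γatt b) := by
    intro b hb
    have hhb : h b ∈ K := hKm hb
    have key := congrArg (fun γ : ↥X => γ.1 (H ⟨b, hb⟩)) hγ0fix
    simp only [T] at key
    rw [hγattK _ hhb, hγattK _ hb]
    have hs : H.symm (H ⟨b, hb⟩) = ⟨b, hb⟩ := H.symm_apply_apply _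
    have hv : (⟨h b, hhb⟩ : ↥K) = H ⟨b, hb⟩ := Subtype.ext (hHval ⟨b, hb⟩).symm
    rw [hv]
    rw [← key]
    simp only [ContinuousMap.coe_mk, hs]
  have hγattI : ∀ b ∈ K, γatt b ∈ I := fun b hb => by rw [hγattK b hb]; exact γ0.2 _
  -- orbit of the graph
  have horb : ∀ n, ∀ b ∈ K,
      (skewSol lam g)^[n] (b, γatt b) = (h^[n] b, γatt (h^[n] b)) := by
    intro n
    induction n with
    | zero => intro b _; rfl
    | succ n ih =>
      intro b hb
      rw [Function.iterate_succ_apply, Function.iterate_succ_apply]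
      have hstep : skewSol lam g (b, γatt b) = (h b, γatt (h b)) := by
        simp only [skewSol, ← hhdef]
        rw [hconj b hb]
      rw [hstep]
      exact ih (h b) (hKm hb)
  -- fiber contraction
  have hcontr : ∀ n, ∀ c ∈ K, ∀ ξ ∈ I,
      dist ((skewSol lam g)^[n] (c, ξ)).2 (γatt (h^[n] c)) ≤ (l:ℝ)^n * dist ξ (γatt c) := by
    intro n
    induction n with
    | zero => intro c _ ξ _; simp
    | succ n ih =>
      intro c hc ξ hξ
      rw [Function.iterate_succ_apply]
      have hstep : skewSol lam g (c, ξ) = (h c, g c ξ) := by simp only [skewSol, ← hhdef]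
      rw [hstep]
      have h1 := ih (h c) (hKm hc) (g c ξ) (hmaps c (hKB hc) hξ)
      have h2 : dist (g c ξ) (γatt (h c)) ≤ (l:ℝ) * dist ξ (γatt c) := by
        rw [hconj c hc]
        exact lipschitzOnWith_iff_dist_le_mul.mp (hlip c (hKB hc)) _ hξ _ (hγattI c hc)
      calc dist ((skewSol lam g)^[n] (h c, g c ξ)).2 (γatt (h^[n+1] c))
          = dist ((skewSol lam g)^[n] (h c, g c ξ)).2 (γatt (h^[n] (h c))) := by
            rw [Function.iterate_succ_apply]
        _ ≤ (l:ℝ)^n * dist (g c ξ) (γatt (h c)) := h1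
        _ ≤ (l:ℝ)^n * ((l:ℝ) * dist ξ (γatt c)) :=
            mul_le_mul_of_nonneg_left h2 (pow_nonneg l.coe_nonneg n)
        _ = (l:ℝ)^(n+1) * dist ξ (γatt c) := by ring
  -- the graph description of the maximal attractor
  have hgr : maxAttr lam R g I = {p : Base × S1 | p.1 ∈ K ∧ p.2 = γatt p.1} := by
    ext ⟨b, x⟩
    simp only [maxAttr, mem_iInter, mem_setOf_eq]
    constructor
    · intro hmem
      have hbK : b ∈ K := by
        rw [hKdef, solenoidAttractor, mem_iInter]
        intro k
        obtain ⟨⟨c, ξ⟩, hq, heq⟩ := hmem k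
        have hfst : b = (solenoidMap lam)^[k+1] c := by
          have h5 := congrArg Prod.fst heq
          simp only [skew_fst lam g] at h5
          exact h5.symm
        apply iter_img_anti hm k
        exact ⟨c, (mem_prod.mp hq).1, hfst.symm⟩
      refine ⟨hbK, ?_⟩
      set D := Metric.diam (univ : Set S1) with hDdef
      have hD0 : 0 ≤ D := Metric.diam_nonneg
      have hbound : ∀ k : ℕ, dist x (γatt b) ≤ (l:ℝ)^(k+1) * D := by
        intro k
        obtain ⟨⟨c, ξ⟩, hq, heq⟩ := hmem k
        obtain ⟨hcB, hξI⟩ := mem_prod.mp hq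
        obtain ⟨c', hc', hc'b⟩ := attr_preimage hm hinjB (k+1) b hbK
        have hfst : (solenoidMap lam)^[k+1] c = b := by
          have h5 := congrArg Prod.fst heq
          simp only [skew_fst lam g] at h5
          exact h5
        have hceq : c = c' :=
          (hinjB.iterate hm (k+1)) hcB (hKB hc') (by rw [hfst, hc'b])
        have hcK : c ∈ K := hceq ▸ hc'
        have hco := hcontr (k+1) c hcK ξ hξI
        rw [show h^[k+1] c = b from hfst] at hco
        have hsnd : ((skewSol lam g)^[k+1] (c, ξ)).2 = x := congrArg Prod.snd heq
        rw [hsnd] at hco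
        calc dist x (γatt b) ≤ (l:ℝ)^(k+1) * dist ξ (γatt c) := hco
          _ ≤ (l:ℝ)^(k+1) * D := by
              refine mul_le_mul_of_nonneg_left ?_ (pow_nonneg l.coe_nonneg _)
              exact Metric.dist_le_diam_of_mem isCompact_univ.isBounded (mem_univ _) (mem_univ _)
      have htend : Tendsto (fun k : ℕ => (l:ℝ)^(k+1) * D) atTop (nhds 0) := by
        have h1 : Tendsto (fun k : ℕ => (l:ℝ)^(k+1)) atTop (nhds 0) :=
          (tendsto_pow_atTop_nhds_zero_of_lt_one l.coe_nonneg hl).comp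
            (tendsto_add_atTop_nat 1)
        simpa using h1.mul_const D
      have hdle : dist x (γatt b) ≤ 0 := ge_of_tendsto' htend hbound
      exact dist_le_zero.mp hdle
    · rintro ⟨hbK, rfl⟩
      intro k
      obtain ⟨c, hc, hcb⟩ := attr_preimage hm hinjB (k+1) b hbK
      refine ⟨(c, γatt c), mem_prod.mpr ⟨hKB hc, hγattI c hc⟩, ?_⟩
      rw [horb (k+1) c hc, hcb]
  -- the projection homeomorphism
  have hmem1 : ∀ p : Base × S1, p ∈ maxAttr lam R g I → p.1 ∈ K ∧ p.2 = γatt p.1 :=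
    fun p hp => by rw [hgr] at hp; exact hp
  have hmem2 : ∀ b ∈ K, (b, γatt b) ∈ maxAttr lam R g I :=
    fun b hb => by rw [hgr]; exact ⟨hb, rfl⟩
  have hcg : Continuous (fun b : ↥K => γatt ↑b) := by
    have heq : (fun b : ↥K => γatt ↑b) = fun b : ↥K => γ0.1 b := by
      funext b
      rw [hγattK _ b.2]
    rw [heq]
    exact γ0.1.continuous
  have hcO : ContinuousOn γatt K := by
    rw [continuousOn_iff_continuous_restrict]
    exact hcg
  refine ⟨γatt, hcO, hγattI, hgr, ?_, hconj⟩
  refine ⟨⟨⟨fun q => ⟨q.1.1, (hmem1 _ q.2).1⟩, fun b => ⟨(b.1, γatt b.1), hmem2 _ b.2⟩,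
    ?_, ?_⟩, ?_, ?_⟩, fun p => rfl⟩
  · intro q
    exact Subtype.ext (Prod.ext rfl (hmem1 _ q.2).2.symm)
  · intro b
    rfl
  · exact (continuous_fst.comp continuous_subtype_val).subtype_mk _
  · exact (continuous_subtype_val.prodMk hcg).subtype_mk _
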